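/- Let R be a commutative ring with identity, let A be an n×n matrix over R with McCoy rank less than n, and let w ∈ R^n be a left eigenvector of A for the eigenvalue 0 (i.e., wᵀA = 0). Then for all i, j ∈ {1,...,n}, w_i · (Adj A)_j = w_j · (Adj A)_i, where (Adj A)_k denotes the k-th column of the adjugate of A. -/

import Mathlib

open Matrix

private lemma det_updateRow_finsum {R : Type*} [CommRing R] {n : ℕ}
    (M : Matrix (Fin n) (Fin n) R) (j : Fin n) (v : Fin n → Fin n → R)
    (s : Finset (Fin n)) :
    det (M.updateRow j (∑ l ∈ s, v l)) = ∑ l ∈ s, det (M.updateRow j (v l)) := by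
  classical
  induction s using Finset.induction_on with
  | empty =>
      simp only [Finset.sum_empty]
      rw [show (0 : Fin n → R) = (0 : R) • (0 : Fin n → R) by simp,
        det_updateRow_smul, zero_mul]
  | insert _ _ hk ih =>
      rw [Finset.sum_insert hk, det_updateRow_add, ih, Finset.sum_insert hk]

/-- Grinberg's lemma: if `w` is a left eigenvector of `A` for the eigenvalue `0`
(which forces the McCoy rank of `A` to be smaller than `n`), then
`w i * (Adj A)_j = w j * (Adj A)_i` for all columns `i, j` of the adjugate. -/
theorem adjugate_columns_proportional_of_left_eigenvector_zero
    {R : Type*} [CommRing R] {n : ℕ} (A : Matrix (Fin n) (Fin n) R)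
    (w : Fin n → R) (hw : w ≠ 0) (hwA : A.vecMul w = 0) :
    ∀ i j k : Fin n, w i * A.adjugate k j = w j * A.adjugate k i := by
  intro i j k
  rcases eq_or_ne i j with rfl | hij
  · rfl
  have hsum : ∑ l, w l • A l = 0 := by
    funext m
    have h := congrFun hwA m
    simpa [vecMul, dotProduct, Finset.sum_apply] using h
  set e : Fin n → R := Pi.single k 1 with he
  set B : Matrix (Fin n) (Fin n) R := A.updateRow i e with hB
  have hBj : B j = A j := updateRow_ne hij.symm
  have hBi : B i = e := updateRow_self
  -- Key multilinearity computation
  have key : ∑ l, w l * det (B.updateRow j (A l)) = 0 := by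
    calc ∑ l, w l * det (B.updateRow j (A l))
        = ∑ l, det (B.updateRow j (w l • A l)) := by
          simp [det_updateRow_smul]
      _ = det (B.updateRow j (∑ l, w l • A l)) :=
          (det_updateRow_finsum B j _ Finset.univ).symm
      _ = 0 := by
          rw [hsum, show (0 : Fin n → R) = (0 : R) • (0 : Fin n → R) by simp,
            det_updateRow_smul, zero_mul]
  -- terms other than i, j vanish
  have hvanish : ∀ l ∈ Finset.univ, l ∉ ({i, j} : Finset (Fin n)) →
      w l * det (B.updateRow j (A l)) = 0 := by
    intro l _ hl
    simp only [Finset.mem_insert, Finset.mem_singleton, not_or] at hl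
    have hAl : A l = B l := (updateRow_ne hl.1).symm
    rw [hAl, det_updateRow_eq_zero hl.2, mul_zero]
  have hsplit : ∑ l, w l * det (B.updateRow j (A l))
      = w i * det (B.updateRow j (A i)) + w j * det (B.updateRow j (A j)) := by
    rw [← Finset.sum_subset (Finset.subset_univ ({i, j} : Finset (Fin n))) hvanish,
      Finset.sum_pair hij]
  -- the j-term is w j * det B
  have hjterm : B.updateRow j (A j) = B := by rw [← hBj, updateRow_eq_self]
  -- the i-term is a row swap of A.updateRow j e
  have hswap : (B.updateRow j (A i)).submatrix (Equiv.swap i j) id = A.updateRow j e := by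
    ext m m'
    rcases eq_or_ne m i with rfl | hmi
    · simp [Equiv.swap_apply_left, updateRow_self, updateRow_ne hij.symm, hij]
    rcases eq_or_ne m j with rfl | hmj
    · simp [Equiv.swap_apply_right, updateRow_ne hij, updateRow_self, hBi]
    · simp [hB, Equiv.swap_apply_of_ne_of_ne hmi hmj, updateRow_ne hmj, updateRow_ne hmi]
  have hdetswap : det (A.updateRow j e) = - det (B.updateRow j (A i)) := by
    rw [← hswap, det_permute, Equiv.Perm.sign_swap hij]
    push_cast
    ring
  rw [hjterm] at hsplit
  rw [adjugate_apply, adjugate_apply, ← he, ← hB, hdetswap]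
  rw [hsplit] at key
  linear_combination -key
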